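/- Properties of the inner minimization algorithm. Let T > 0, α ∈ {0,1}, f ∈ W^{1,2}([0,T]; 𝓕), v₀ ∈ 𝓔 a critical point of v ↦ J(v) + αψ(v − v₀) on 𝐀(f(0)), and assume (J1)–(J3) hold, and (Ψ1)–(Ψ3) if α = 1. Let δ ∈ (0,1), let i ∈ ℕ with iδ ≤ T, set v^{−1} := v₀, and suppose v^{i−1} ∈ 𝓔 is a critical point of v ↦ J(v) + αψ(v − v^{i−2}) on 𝐀(f((i−1)δ)). Define v^i_0 := v^{i−1} and, for j ∈ ℕ, let v^i_j be the unique minimizer of v ↦ J(v) + η‖v − v^i_{j−1}‖² + αψ(v − v^i_0) over 𝐀(f(iδ)) (existence and uniqueness follow from (J1),(J2)). Then: (i) the sequence (J(v^i_j) + αψ(v^i_j − v^i_0))_{j ≥ 2} is nonincreasing and convergent; (ii) the sequence (v^i_j)_{j ≥ 0} is bounded and ‖v^i_j − v^i_{j−1}‖ → 0 as j → ∞; (iii) every cluster point v^i of (v^i_j)_{j ≥ 0} satisfies A v^i = f(iδ) and (∂J(v^i) + ∂(αψ)(v^i − v^{i−1})) ∩ ran(A*) ≠ ∅, i.e. v^i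 is a critical point of v ↦ J(v) + αψ(v − v^{i−1}) on 𝐀(f(iδ)). -/

import Mathlib

open MeasureTheory Filter Set
open scoped RealInnerProductSpace Topology Pointwise ENNReal

noncomputable section

/-- The Fréchet subdifferential of `S : E → ℝ` at `u`. -/
def fsub {E : Type*} [NormedAddCommGroup E] [InnerProductSpace ℝ E]
    (S : E → ℝ) (u : E) : Set E :=
  {ξ | 0 ≤ Filter.liminf (fun v => (S v - S u - ⟪ξ, v - u⟫) / ‖v - u‖) (𝓝[≠] u)}

/-- The convex subdifferential of `ψ : E → ℝ` at `v`. -/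
def csub {E : Type*} [NormedAddCommGroup E] [InnerProductSpace ℝ E]
    (ψ : E → ℝ) (v : E) : Set E :=
  {ξ | ∀ w, ψ v + ⟪ξ, w - v⟫ ≤ ψ w}

/-- `u` is a critical point of `S` on the affine space `{v | A v = fv}`. -/
def IsCritPt {E F : Type*} [NormedAddCommGroup E] [InnerProductSpace ℝ E]
    [FiniteDimensional ℝ E] [NormedAddCommGroup F] [InnerProductSpace ℝ F]
    [FiniteDimensional ℝ F] (A : E →ₗ[ℝ] F) (S : E → ℝ) (fv : F) (u : E) : Prop :=
  A u = fv ∧ (fsub S u ∩ Set.range (LinearMap.adjoint A)).Nonempty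

/-- A discrete quasistatic evolution with time step `δ`, initial condition `v0`
and constraint `f` on the time interval `[-δ, T]`. -/
def IsDiscreteQE {E F : Type*} [NormedAddCommGroup E] [InnerProductSpace ℝ E]
    [FiniteDimensional ℝ E] [NormedAddCommGroup F] [InnerProductSpace ℝ F]
    [FiniteDimensional ℝ F] (J ψ : E → ℝ) (α : ℝ) (A : E →ₗ[ℝ] F) (T δ : ℝ)
    (f : ℝ → F) (v0 : E) (vδ : ℝ → E) : Prop :=
  (∀ t ∈ Set.Ico (-δ) δ ∩ Set.Icc (-δ) T, vδ t = v0) ∧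
  (∀ i : ℕ, (i : ℝ) * δ ≤ T →
    ∀ t ∈ Set.Icc (0 : ℝ) T ∩ Set.Ico ((i : ℝ) * δ) ((i : ℝ) * δ + δ),
      vδ t = vδ ((i : ℝ) * δ)) ∧
  (∀ i : ℕ, (i : ℝ) * δ ≤ T →
    IsCritPt A (fun v => J v + α * ψ (v - vδ ((i : ℝ) * δ - δ))) (f ((i : ℝ) * δ))
      (vδ ((i : ℝ) * δ)))

/-- An approximable quasistatic evolution with initial condition `v0` and constraint `f`. -/
def IsApproxQE {E F : Type*} [NormedAddCommGroup E] [InnerProductSpace ℝ E]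
    [FiniteDimensional ℝ E] [MeasurableSpace E] [BorelSpace E]
    [NormedAddCommGroup F] [InnerProductSpace ℝ F] [FiniteDimensional ℝ F]
    (J ψ : E → ℝ) (α : ℝ) (A : E →ₗ[ℝ] F) (T : ℝ) (f : ℝ → F)
    (v0 : E) (v : ℝ → E) : Prop :=
  Measurable v ∧ (∃ C : ℝ, ∀ t ∈ Set.Icc (0 : ℝ) T, ‖v t‖ ≤ C) ∧
  ∀ t ∈ Set.Icc (0 : ℝ) T, ∃ (δ : ℕ → ℝ) (vd : ℕ → ℝ → E),
    (∀ k, δ k ∈ Set.Ioo (0 : ℝ) 1) ∧ Tendsto δ atTop (𝓝 0) ∧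
    (∀ k, IsDiscreteQE J ψ α A T (δ k) f v0 (vd k)) ∧
    Filter.liminf (fun k => ‖vd k t - v t‖) atTop = 0

/-- `s` is the `ψ`-sum associated with some partition `a = t₀ < t₁ < ⋯ < t_k = b`. -/
def IsPartSum {E : Type*} [NormedAddCommGroup E] (ψ : E → ℝ) (u : ℝ → E)
    (a b : ℝ) (s : ℝ) : Prop :=
  ∃ (k : ℕ) (t : ℕ → ℝ), t 0 = a ∧ t k = b ∧ (∀ i < k, t i < t (i + 1)) ∧
    s = ∑ i ∈ Finset.range k, ψ (u (t (i + 1)) - u (t i))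

/-- The `ψ`-variation of `u` on `[a,b]`, as a real number (supremum of partition sums). -/
def psiVar {E : Type*} [NormedAddCommGroup E] (ψ : E → ℝ) (u : ℝ → E) (a b : ℝ) : ℝ :=
  sSup {s : ℝ | IsPartSum ψ u a b s}

/-- The `ψ`-variation of `u` on `[a,b]`, with values in `[0,∞]`. -/
def psiVarE {E : Type*} [NormedAddCommGroup E] (ψ : E → ℝ) (u : ℝ → E) (a b : ℝ) : ℝ≥0∞ :=
  sSup {s : ℝ≥0∞ | ∃ r : ℝ, IsPartSum ψ u a b r ∧ s = ENNReal.ofReal r}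

/-- The data of the incremental minimization algorithm: `vi i` is the approximate
solution at step `i` (a cluster point of the inner iterates `vseq i`), produced from
`vi (i-1)` by iteratively minimizing `v ↦ J v + η ‖v - wⱼ‖² + α ψ (v - vi (i-1))`. -/
def AlgData {E F : Type*} [NormedAddCommGroup E] [InnerProductSpace ℝ E]
    [FiniteDimensional ℝ E] [NormedAddCommGroup F] [InnerProductSpace ℝ F]
    [FiniteDimensional ℝ F] (J ψ : E → ℝ) (α : ℝ) (A : E →ₗ[ℝ] F) (η T δ : ℝ)
    (f : ℝ → F) (v0 : E) (vi : ℕ → E) (vseq : ℕ → ℕ → E) : Prop :=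
  vi 0 = v0 ∧
  ∀ i : ℕ, 1 ≤ i → (i : ℝ) * δ ≤ T →
    vseq i 0 = vi (i - 1) ∧
    (∀ j : ℕ, A (vseq i (j + 1)) = f ((i : ℝ) * δ) ∧
      ∀ u : E, A u = f ((i : ℝ) * δ) →
        J (vseq i (j + 1)) + η * ‖vseq i (j + 1) - vseq i j‖ ^ 2
            + α * ψ (vseq i (j + 1) - vseq i 0)
          ≤ J u + η * ‖u - vseq i j‖ ^ 2 + α * ψ (u - vseq i 0)) ∧
    MapClusterPt (vi i) atTop (vseq i)

/-- The piecewise constant evolution associated with the algorithm outputs `vi`. -/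
def AlgEvol {E : Type*} [NormedAddCommGroup E] (T δ : ℝ) (v0 : E) (vi : ℕ → E)
    (vδ : ℝ → E) : Prop :=
  (∀ t ∈ Set.Ico (-δ) (0 : ℝ), vδ t = v0) ∧
  (∀ i : ℕ, (i : ℝ) * δ ≤ T →
    ∀ t ∈ Set.Icc (-δ) T ∩ Set.Ico ((i : ℝ) * δ) ((i : ℝ) * δ + δ), vδ t = vi i)


section Helpers
set_option linter.unusedSectionVars false

variable {E : Type*} [NormedAddCommGroup E] [InnerProductSpace ℝ E]

lemma liminf_nonneg_aux {α : Type*} {l : Filter α} {q : α → ℝ}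
    (h : ∀ ε : ℝ, 0 < ε → ∀ᶠ x in l, -ε ≤ q x) : 0 ≤ Filter.liminf q l := by
  rw [Filter.liminf_eq]
  set S : Set ℝ := {a | ∀ᶠ x in l, a ≤ q x} with hS
  by_cases hb : BddAbove S
  · by_contra hneg
    push_neg at hneg
    have h1 : (-(-(sSup S) / 2) : ℝ) ≤ sSup S :=
      le_csSup hb (h _ (by linarith))
    linarith
  · rw [csSup_of_not_bddAbove hb, Real.sSup_empty]

lemma nonneg_of_forall_unit {a d : ℝ} (h : ∀ t : ℝ, 0 < t → t ≤ 1 → 0 ≤ a + t * d) :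
    0 ≤ a := by
  by_contra hneg
  push_neg at hneg
  set t := min 1 (-a / (2 * (|d| + 1))) with ht
  have ht0 : 0 < t := by
    apply lt_min one_pos
    apply div_pos (by linarith) (by positivity)
  have ht1 : t ≤ 1 := min_le_left _ _
  have htd : t ≤ -a / (2 * (|d| + 1)) := min_le_right _ _
  have h1 := h t ht0 ht1
  have h2 : t * d ≤ t * |d| := by
    apply mul_le_mul_of_nonneg_left (le_abs_self d) ht0.le
  have h3 : t * |d| ≤ (-a / (2 * (|d| + 1))) * (|d| + 1) := by
    calc t * |d| ≤ t * (|d| + 1) := by nlinarith [ht0.le]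
      _ ≤ (-a / (2 * (|d| + 1))) * (|d| + 1) := by
          apply mul_le_mul_of_nonneg_right htd (by positivity)
  have h4 : (-a / (2 * (|d| + 1))) * (|d| + 1) = -a / 2 := by
    field_simp
  nlinarith

lemma mem_fsub_of_quadratic {J : E → ℝ} {v g : E} {K : ℝ} (hK : 0 ≤ K)
    (h : ∀ u, J v + ⟪g, u - v⟫ - K * ‖u - v‖ ^ 2 ≤ J u) : g ∈ fsub J v := by
  apply liminf_nonneg_aux
  intro ε hε
  have h1 : ∀ᶠ u in 𝓝[≠] v, ‖u - v‖ < ε / (K + 1) := by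
    apply eventually_nhdsWithin_of_eventually_nhds
    have hc : Continuous fun u : E => ‖u - v‖ := (continuous_id.sub continuous_const).norm
    have := hc.tendsto v
    simp only [sub_self, norm_zero] at this
    exact this.eventually_lt_const (by positivity)
  filter_upwards [h1, eventually_mem_nhdsWithin] with u hu hne
  have hr : 0 < ‖u - v‖ := by
    rw [norm_pos_iff, sub_ne_zero]; exact hne
  rw [le_div_iff₀ hr]
  have h2 := h u
  have h3 : ‖u - v‖ * (K + 1) < ε := (lt_div_iff₀ (by positivity)).mp hu
  nlinarith [h2, hr]

lemma lsc_attains {X : Type*} [NormedAddCommGroup X] [NormedSpace ℝ X] [FiniteDimensional ℝ X]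
    {h : X → ℝ} (hlsc : LowerSemicontinuous h) (x₀ : X)
    (hb : Bornology.IsBounded {x | h x ≤ h x₀}) : ∃ m : X, ∀ x, h m ≤ h x := by
  set K := {x | h x ≤ h x₀} with hK
  have hKc : IsClosed K := by
    have := hlsc.isClosed_preimage (h x₀)
    simpa [Set.preimage, Set.mem_Iic] using this
  have hcomp : IsCompact K := Metric.isCompact_of_isClosed_isBounded hKc hb
  have hne : K.Nonempty := ⟨x₀, show h x₀ ≤ h x₀ from le_refl _⟩
  have hbdd : BddBelow (h '' K) := by
    by_contra hnb
    have hseq : ∀ n : ℕ, ∃ x ∈ K, h x < -(n : ℝ) := by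
      intro n
      by_contra hx
      push_neg at hx
      exact hnb ⟨-(n : ℝ), by rintro y ⟨x, hxK, rfl⟩; exact hx x hxK⟩
    choose x hxK hxlt using hseq
    obtain ⟨a, haK, φ, hφ, hta⟩ := hcomp.tendsto_subseq hxK
    have hev : ∀ᶠ n in atTop, h a - 1 < h (x (φ n)) :=
      hta.eventually (hlsc a (h a - 1) (by linarith))
    obtain ⟨N, hN⟩ := exists_nat_ge (1 - h a)
    obtain ⟨n, hn1, hn2⟩ := (hev.and (eventually_ge_atTop N)).exists
    have h4 : (n : ℝ) ≤ (φ n : ℝ) := by exact_mod_cast hφ.le_apply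
    have h5 := hxlt (φ n)
    have h6 : (N : ℝ) ≤ (n : ℝ) := by exact_mod_cast hn2
    linarith
  set m0 := sInf (h '' K) with hm0
  have hseq : ∀ n : ℕ, ∃ x ∈ K, h x < m0 + 1 / ((n : ℝ) + 1) := by
    intro n
    have hlt : m0 < m0 + 1 / ((n : ℝ) + 1) := lt_add_of_pos_right _ (by positivity)
    obtain ⟨y, ⟨x, hxK, rfl⟩, hy2⟩ := exists_lt_of_csInf_lt (hne.image h) hlt
    exact ⟨x, hxK, hy2⟩
  choose x hxK hxlt using hseq
  obtain ⟨a, haK, φ, hφ, hta⟩ := hcomp.tendsto_subseq hxK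
  have hle : h a ≤ m0 := by
    by_contra hgt
    push_neg at hgt
    set ε := (h a - m0) / 2 with hε
    have hev : ∀ᶠ n in atTop, h a - ε < h (x (φ n)) :=
      hta.eventually (hlsc a (h a - ε) (by linarith))
    obtain ⟨N, hN⟩ := exists_nat_ge (1 / ε)
    obtain ⟨n, hn1, hn2⟩ := (hev.and (eventually_ge_atTop N)).exists
    have h4 : (n : ℕ) ≤ φ n := hφ.le_apply
    have h5 := hxlt (φ n)
    have h6 : 1 / ((φ n : ℝ) + 1) ≤ 1 / ((N : ℝ) + 1) := by
      apply one_div_le_one_div_of_le (by positivity)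
      have : (N : ℝ) ≤ (φ n : ℝ) := by exact_mod_cast le_trans hn2 h4
      linarith
    have h7 : 1 / ((N : ℝ) + 1) < ε := by
      rw [div_lt_iff₀ (by positivity)]
      have hε0 : 0 < ε := by linarith
      have hN' : 1 / ε ≤ (N : ℝ) := hN
      calc (1 : ℝ) = ε * (1 / ε) := by field_simp
        _ ≤ ε * N := by nlinarith
        _ < ε * ((N : ℝ) + 1) := by nlinarith
    linarith
  refine ⟨a, fun y => ?_⟩
  by_cases hyK : y ∈ K
  · exact le_trans hle (csInf_le hbdd ⟨y, hyK, rfl⟩)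
  · have h1 : h x₀ < h y := by
      have := hyK
      simp only [hK, Set.mem_setOf_eq, not_le] at this
      exact this
    have h2 : h a ≤ h x₀ := haK
    linarith

lemma fsub_univ_of_unbounded {J : E → ℝ} {v : E}
    (hS : ¬ ∃ a : ℝ, ∀ᶠ u in 𝓝[≠] v, a ≤ (J u - J v) / ‖u - v‖) (ξ : E) : ξ ∈ fsub J v := by
  rw [fsub, Set.mem_setOf_eq, Filter.liminf_eq]
  have hempty : {a : ℝ | ∀ᶠ u in 𝓝[≠] v, a ≤ (J u - J v - ⟪ξ, u - v⟫) / ‖u - v‖} = ∅ := by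
    ext a
    simp only [Set.mem_setOf_eq, Set.mem_empty_iff_false, iff_false]
    intro ha
    apply hS
    refine ⟨a - ‖ξ‖, ?_⟩
    filter_upwards [ha, eventually_mem_nhdsWithin] with u hu hne
    have hr : 0 < ‖u - v‖ := by rw [norm_pos_iff, sub_ne_zero]; exact hne
    have hCS : |⟪ξ, u - v⟫| ≤ ‖ξ‖ * ‖u - v‖ := abs_real_inner_le_norm _ _
    rw [le_div_iff₀ hr] at hu ⊢
    have habs := abs_le.mp hCS
    linarith [hu, habs.1]
  rw [hempty, Real.sSup_empty]

lemma liminf_nonneg_of_le {α : Type*} {l : Filter α} {q1 q2 : α → ℝ}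
    (hq : ∀ x, q1 x ≤ q2 x) (C : ℝ) (hC : ∀ᶠ x in l, q2 x ≤ q1 x + C)
    (h : 0 ≤ Filter.liminf q1 l) : 0 ≤ Filter.liminf q2 l := by
  rw [Filter.liminf_eq] at h ⊢
  set S1 : Set ℝ := {a | ∀ᶠ x in l, a ≤ q1 x} with hS1
  set S2 : Set ℝ := {a | ∀ᶠ x in l, a ≤ q2 x} with hS2
  by_cases hb2 : BddAbove S2
  · by_cases hne1 : S1.Nonempty
    · have hsub : S1 ⊆ S2 := by
        intro a ha
        exact ha.mono fun x hx => le_trans hx (hq x)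
      exact le_trans h (csSup_le_csSup hb2 hne1 hsub)
    · have hne2 : S2 = ∅ := by
        by_contra hne
        obtain ⟨a, ha⟩ := Set.nonempty_iff_ne_empty.mpr hne
        refine hne1 ⟨a - C, ?_⟩
        filter_upwards [ha, hC] with x hx1 hx2
        linarith
      rw [hne2, Real.sSup_empty]
  · rw [csSup_of_not_bddAbove hb2, Real.sSup_empty]

lemma norm_sq_div_norm (x : E) : ‖x‖ ^ 2 / ‖x‖ = ‖x‖ := by
  by_cases hx : ‖x‖ = 0
  · simp [hx]
  · field_simp [hx]

lemma mem_fsub_eta_of_mem_fsub {J : E → ℝ} {η : ℝ} (hη : 0 ≤ η) {v ξ : E}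
    (hmem : ξ ∈ fsub J v) :
    ξ + (2 * η) • v ∈ fsub (fun x => J x + η * ‖x‖ ^ 2) v := by
  rw [fsub, Set.mem_setOf_eq]
  rw [fsub, Set.mem_setOf_eq] at hmem
  have hid : ∀ u : E,
      (J u + η * ‖u‖ ^ 2 - (J v + η * ‖v‖ ^ 2) - ⟪ξ + (2 * η) • v, u - v⟫) / ‖u - v‖
        = (J u - J v - ⟪ξ, u - v⟫) / ‖u - v‖ + η * ‖u - v‖ := by
    intro u
    have h1 : ⟪ξ + (2 * η) • v, u - v⟫ = ⟪ξ, u - v⟫ + 2 * η * ⟪v, u - v⟫ := by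
      rw [inner_add_left, real_inner_smul_left]
    have h2 : ‖u - v‖ ^ 2 = ‖u‖ ^ 2 - 2 * ⟪u, v⟫ + ‖v‖ ^ 2 := norm_sub_sq_real u v
    have h3 : ⟪v, u - v⟫ = ⟪v, u⟫ - ‖v‖ ^ 2 := by
      rw [inner_sub_right, real_inner_self_eq_norm_sq]
    have h4 : ⟪u, v⟫ = ⟪v, u⟫ := real_inner_comm v u
    have hnum : J u + η * ‖u‖ ^ 2 - (J v + η * ‖v‖ ^ 2) - ⟪ξ + (2 * η) • v, u - v⟫
        = (J u - J v - ⟪ξ, u - v⟫) + η * ‖u - v‖ ^ 2 := by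
      rw [h1, h3]; nlinarith [h2, h4]
    rw [hnum, add_div, mul_div_assoc, norm_sq_div_norm]
  have hconv : (fun u : E =>
      (J u + η * ‖u‖ ^ 2 - (J v + η * ‖v‖ ^ 2) - ⟪ξ + (2 * η) • v, u - v⟫) / ‖u - v‖)
      = fun u => (J u - J v - ⟪ξ, u - v⟫) / ‖u - v‖ + η * ‖u - v‖ := funext hid
  rw [hconv]
  apply liminf_nonneg_of_le (q1 := fun u => (J u - J v - ⟪ξ, u - v⟫) / ‖u - v‖)
    (C := η * 1 + 1)
  · intro u; nlinarith [norm_nonneg (u - v), hη]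
  · have h1 : ∀ᶠ u in 𝓝[≠] v, ‖u - v‖ < 1 := by
      apply eventually_nhdsWithin_of_eventually_nhds
      have hc : Continuous fun u : E => ‖u - v‖ := (continuous_id.sub continuous_const).norm
      have := hc.tendsto v
      simp only [sub_self, norm_zero] at this
      exact this.eventually_lt_const one_pos
    filter_upwards [h1] with u hu
    have := norm_nonneg (u - v)
    nlinarith
  · exact hmem

end Helpers

set_option maxHeartbeats 4000000 in
/-- Properties of the inner minimization algorithm, Lemma 3.? of the paper. -/
theorem inner_minimization_algorithm_properties
    {E F : Type*} [NormedAddCommGroup E] [InnerProductSpace ℝ E] [FiniteDimensional ℝ E]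
    [NormedAddCommGroup F] [InnerProductSpace ℝ F] [FiniteDimensional ℝ F]
    (A : E →ₗ[ℝ] F) (hA : Function.Surjective A)
    (γ : ℝ) (hγ : 0 < γ) (hAγ : ∀ q : F, γ * ‖q‖ ≤ ‖LinearMap.adjoint A q‖)
    (J : E → ℝ) (hJnonneg : ∀ v, 0 ≤ J v)
    (hJ1 : ∀ C : ℝ, Bornology.IsBounded {v : E | J v + ‖A v‖ ^ 2 ≤ C})
    (η : ℝ) (hη : 0 < η) (ν : ℝ) (hν : 0 < ν)
    (hJ2 : ∀ v₁ v₂ ξ₁ ξ₂ : E, ξ₁ ∈ fsub (fun v => J v + η * ‖v‖ ^ 2) v₁ →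
      ξ₂ ∈ fsub (fun v => J v + η * ‖v‖ ^ 2) v₂ →
      ν * ‖v₁ - v₂‖ ^ 2 ≤ ⟪ξ₁ - ξ₂, v₁ - v₂⟫)
    (L : ℝ) (hL : 0 < L)
    (hJ3 : ∀ v ξ : E, ξ ∈ fsub J v → ‖ξ‖ ≤ L * (J v + 1))
    (α : ℝ) (hα : α = 0 ∨ α = 1)
    (ψ : E → ℝ) (hψnonneg : ∀ v, 0 ≤ ψ v)
    (hΨ : α = 1 →
      (∀ v : E, ψ v = 0 ↔ v = 0) ∧
      (∀ v₁ v₂ : E, ψ (v₁ + v₂) ≤ ψ v₁ + ψ v₂) ∧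
      (∀ c : ℝ, 0 ≤ c → ∀ v : E, ψ (c • v) = c * ψ v))
    (T : ℝ) (hT : 0 < T)
    (f f' : ℝ → F)
    (hf'L2 : MemLp f' 2 (volume.restrict (Set.Icc (0 : ℝ) T)))
    (hfFTC : ∀ t ∈ Set.Icc (0 : ℝ) T, f t = f 0 + ∫ s in (0 : ℝ)..t, f' s)
    (v₀ : E) (hv₀ : IsCritPt A (fun v => J v + α * ψ (v - v₀)) (f 0) v₀)
    (δ : ℝ) (hδ : δ ∈ Set.Ioo (0 : ℝ) 1)
    (i : ℕ) (hi : 1 ≤ i) (hiT : (i : ℝ) * δ ≤ T)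
    -- v^{i-2} and v^{i-1}; for i = 1 one takes v^{i-2} = v^{-1} := v₀
    (vm2 vm1 : E) (hvm2 : i = 1 → vm2 = v₀)
    (hvm1 : IsCritPt A (fun v => J v + α * ψ (v - vm2)) (f (((i : ℝ) - 1) * δ)) vm1)
    -- the inner iterates: w 0 = v^{i-1}; w (j+1) is the (unique) minimizer
    (w : ℕ → E) (hw0 : w 0 = vm1)
    (hwmin : ∀ j : ℕ, A (w (j + 1)) = f ((i : ℝ) * δ) ∧
      ∀ u : E, A u = f ((i : ℝ) * δ) →
        J (w (j + 1)) + η * ‖w (j + 1) - w j‖ ^ 2 + α * ψ (w (j + 1) - w 0)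
          ≤ J u + η * ‖u - w j‖ ^ 2 + α * ψ (u - w 0)) :
    -- (i) monotonicity and convergence of the energies for j ≥ 2
    ((∀ j : ℕ, 2 ≤ j →
        J (w (j + 1)) + α * ψ (w (j + 1) - w 0) ≤ J (w j) + α * ψ (w j - w 0)) ∧
      ∃ l : ℝ, Tendsto (fun j => J (w j) + α * ψ (w j - w 0)) atTop (𝓝 l)) ∧
    -- (ii) boundedness and asymptotically vanishing increments
    ((∃ C : ℝ, ∀ j : ℕ, ‖w j‖ ≤ C) ∧
      Tendsto (fun j => ‖w (j + 1) - w j‖) atTop (𝓝 0)) ∧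
    -- (iii) every cluster point is a constrained critical point
    (∀ z : E, MapClusterPt z atTop w →
      A z = f ((i : ℝ) * δ) ∧
      ((fsub J z + csub (fun x => α * ψ x) (z - vm1)) ∩
        Set.range (LinearMap.adjoint A)).Nonempty) := by
  classical
  set b : F := f ((i : ℝ) * δ) with hbdef
  have hαψ : ∀ x : E, 0 ≤ α * ψ x := by
    rcases hα with h | h
    · intro x; simp [h]
    · intro x; simpa [h] using hψnonneg x
  set e : ℕ → ℝ := fun j => J (w j) + α * ψ (w j - w 0) with he
  have hfeas : ∀ j : ℕ, 1 ≤ j → A (w j) = b := by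
    intro j hj
    have h1 := (hwmin (j - 1)).1
    rwa [Nat.sub_add_cancel hj] at h1
  have hmono : ∀ j : ℕ, 1 ≤ j → e (j + 1) + η * ‖w (j + 1) - w j‖ ^ 2 ≤ e j := by
    intro j hj
    have h1 := (hwmin j).2 (w j) (hfeas j hj)
    simp only [sub_self, norm_zero] at h1
    simp only [he]
    nlinarith [h1]
  have he_nonneg : ∀ j, 0 ≤ e j := fun j => add_nonneg (hJnonneg _) (hαψ _)
  have hanti : Antitone fun k => e (k + 1) := by
    apply antitone_nat_of_succ_le
    intro k
    have h1 := hmono (k + 1) (by omega)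
    nlinarith [sq_nonneg ‖w (k + 1 + 1) - w (k + 1)‖, hη.le]
  have hbddB : BddBelow (Set.range fun k => e (k + 1)) :=
    ⟨0, by rintro y ⟨k, rfl⟩; exact he_nonneg _⟩
  have htendg : Tendsto (fun k => e (k + 1)) atTop (𝓝 (⨅ k, e (k + 1))) :=
    tendsto_atTop_ciInf hanti hbddB
  set l : ℝ := ⨅ k, e (k + 1) with hldef
  have htende : Tendsto e atTop (𝓝 l) := (tendsto_add_atTop_iff_nat 1).mp htendg
  have parti1 : ∀ j : ℕ, 2 ≤ j → e (j + 1) ≤ e j := by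
    intro j hj
    have h1 := hmono j (by omega)
    nlinarith [sq_nonneg ‖w (j + 1) - w j‖, hη.le]
  -- boundedness
  have hchain : ∀ j : ℕ, 1 ≤ j → e j ≤ e 1 := by
    intro j hj
    induction j with
    | zero => omega
    | succ k ih =>
      rcases Nat.lt_or_ge 1 (k + 1) with h | h
      · have hk : 1 ≤ k := by omega
        have h2 := hmono k hk
        have h3 : e (k + 1) ≤ e k := by
          nlinarith [sq_nonneg ‖w (k + 1) - w k‖, hη.le]
        exact le_trans h3 (ih hk)
      · have : k = 0 := by omega
        subst this
        exact le_refl _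
  have hsubl : ∀ j : ℕ, 1 ≤ j → w j ∈ {v : E | J v + ‖A v‖ ^ 2 ≤ e 1 + ‖b‖ ^ 2} := by
    intro j hj
    have h1 : J (w j) ≤ e j := by
      simp only [he]
      nlinarith [hαψ (w j - w 0)]
    have h2 := hchain j hj
    simp only [Set.mem_setOf_eq, hfeas j hj]
    linarith
  obtain ⟨C1, hC1⟩ := isBounded_iff_forall_norm_le.mp (hJ1 (e 1 + ‖b‖ ^ 2))
  have hwbd : ∀ j, ‖w j‖ ≤ max C1 ‖w 0‖ := by
    intro j
    rcases Nat.eq_zero_or_pos j with rfl | hj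
    · exact le_max_right _ _
    · exact le_trans (hC1 _ (hsubl j hj)) (le_max_left _ _)
  -- increments tend to zero
  have hdiff : Tendsto (fun j => e j - e (j + 1)) atTop (𝓝 0) := by
    have h1 := htende.sub htendg
    simpa using h1
  have hsq0 : Tendsto (fun j => ‖w (j + 1) - w j‖ ^ 2) atTop (𝓝 0) := by
    have hg : Tendsto (fun j => (e j - e (j + 1)) / η) atTop (𝓝 0) := by
      have := hdiff.div_const η
      simpa using this
    apply squeeze_zero' (Filter.Eventually.of_forall fun j => sq_nonneg _) _ hg
    filter_upwards [eventually_ge_atTop 1] with j hj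
    have h1 := hmono j hj
    rw [le_div_iff₀ hη]
    nlinarith
  have hinc0 : Tendsto (fun j => ‖w (j + 1) - w j‖) atTop (𝓝 0) := by
    have h1 : Tendsto (fun j => Real.sqrt (‖w (j + 1) - w j‖ ^ 2)) atTop (𝓝 0) := by
      have h0 := (Real.continuous_sqrt.tendsto 0).comp hsq0
      simp only [Function.comp_def, Real.sqrt_zero] at h0
      exact h0
    have h2 : (fun j => Real.sqrt (‖w (j + 1) - w j‖ ^ 2)) = fun j => ‖w (j + 1) - w j‖ := by
      funext j; rw [Real.sqrt_sq (norm_nonneg _)]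
    rwa [h2] at h1
  refine ⟨⟨parti1, ⟨l, htende⟩⟩, ⟨⟨max C1 ‖w 0‖, hwbd⟩, hinc0⟩, ?_⟩
  -- ψ facts
  obtain ⟨Cψ, hCψ0, hφbd, hφsub, hφ0, hφhom⟩ :
      ∃ Cψ : ℝ, 0 ≤ Cψ ∧ (∀ x : E, α * ψ x ≤ Cψ * ‖x‖) ∧
        (∀ x y : E, α * ψ (x + y) ≤ α * ψ x + α * ψ y) ∧ (α * ψ 0 = 0) ∧
        (∀ c : ℝ, 0 ≤ c → ∀ v : E, α * ψ (c • v) = c * (α * ψ v)) := by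
    rcases hα with h | h
    · exact ⟨0, le_refl _, by simp [h], by simp [h], by simp [h], by simp [h]⟩
    · subst h
      obtain ⟨hΨ1, hΨ2, hΨ3⟩ := hΨ rfl
      have hψ0 : ψ 0 = 0 := (hΨ1 0).mpr rfl
      have hsum : ∀ (n : ℕ) (s : Finset (Fin n)) (g : Fin n → E),
          ψ (∑ k ∈ s, g k) ≤ ∑ k ∈ s, ψ (g k) := by
        intro n s g
        induction s using Finset.cons_induction with
        | empty => simp [hψ0]
        | cons a s ha ih =>
          rw [Finset.sum_cons, Finset.sum_cons]
          exact le_trans (hΨ2 _ _) (by linarith)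
      have hscal : ∀ (c : ℝ) (v : E), ψ (c • v) ≤ |c| * (ψ v + ψ (-v)) := by
        intro c v
        rcases le_or_gt 0 c with hc | hc
        · rw [hΨ3 c hc v, abs_of_nonneg hc]
          nlinarith [hψnonneg v, hψnonneg (-v)]
        · have hcv : c • v = (-c) • (-v) := by rw [neg_smul, smul_neg, neg_neg]
          rw [hcv, hΨ3 (-c) (by linarith) (-v), abs_of_neg hc]
          nlinarith [hψnonneg v, hψnonneg (-v)]
      set B := stdOrthonormalBasis ℝ E with hB
      refine ⟨∑ k, (ψ (B k) + ψ (-B k)),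
        Finset.sum_nonneg fun k _ => add_nonneg (hψnonneg _) (hψnonneg _), ?_, ?_, ?_, ?_⟩
      · intro x
        have hx : ∑ k, ⟪B k, x⟫ • B k = x := B.sum_repr' x
        have h1 : ψ x ≤ ∑ k, ψ (⟪B k, x⟫ • B k) := by
          conv_lhs => rw [← hx]
          exact hsum _ Finset.univ _
        have h2 : ∀ k, ψ (⟪B k, x⟫ • B k) ≤ ‖x‖ * (ψ (B k) + ψ (-B k)) := by
          intro k
          refine le_trans (hscal _ _) ?_
          have hCS : |⟪B k, x⟫| ≤ ‖x‖ := by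
            have h3 := abs_real_inner_le_norm (B k) x
            have h4 : ‖B k‖ = 1 := B.orthonormal.1 k
            rw [h4, one_mul] at h3
            exact h3
          nlinarith [hψnonneg (B k), hψnonneg (-B k), abs_nonneg ⟪B k, x⟫]
        calc 1 * ψ x ≤ ∑ k, ψ (⟪B k, x⟫ • B k) := by rw [one_mul]; exact h1
          _ ≤ ∑ k, ‖x‖ * (ψ (B k) + ψ (-B k)) := Finset.sum_le_sum fun k _ => h2 k
          _ = (∑ k, (ψ (B k) + ψ (-B k))) * ‖x‖ := by rw [← Finset.mul_sum]; ring
      · intro x y; simpa using hΨ2 x y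
      · simpa using hψ0
      · intro c hc v; simpa using hΨ3 c hc v
  have hφlip : ∀ x y : E, |α * ψ x - α * ψ y| ≤ Cψ * ‖x - y‖ := by
    intro x y
    rw [abs_sub_le_iff]
    constructor
    · have h1 := hφsub y (x - y)
      have h2 : y + (x - y) = x := by abel
      rw [h2] at h1
      have h3 := hφbd (x - y)
      linarith
    · have h1 := hφsub x (y - x)
      have h2 : x + (y - x) = y := by abel
      rw [h2] at h1
      have h3 := hφbd (y - x)
      rw [norm_sub_rev] at h3
      linarith
  have hφcont : Continuous (fun x : E => α * ψ x) := by
    have hlw : LipschitzWith (Real.toNNReal Cψ) (fun x : E => α * ψ x) := by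
      apply LipschitzWith.of_dist_le_mul
      intro x y
      rw [Real.dist_eq, dist_eq_norm]
      calc |α * ψ x - α * ψ y| ≤ Cψ * ‖x - y‖ := hφlip x y
        _ = (Real.toNNReal Cψ : ℝ) * ‖x - y‖ := by rw [Real.coe_toNNReal _ hCψ0]
    exact hlw.continuous
  -- lower semicontinuity of J from (J3)
  have hlscJ : ∀ v : E, ∀ ε : ℝ, 0 < ε → ∀ᶠ u in 𝓝 v, J v - ε ≤ J u := by
    intro v ε hε
    by_cases hS : ∃ a : ℝ, ∀ᶠ u in 𝓝[≠] v, a ≤ (J u - J v) / ‖u - v‖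
    · obtain ⟨a, ha⟩ := hS
      rw [eventually_nhdsWithin_iff] at ha
      have hball : ∀ᶠ u in 𝓝 v, ‖u - v‖ < ε / (|a| + 1) := by
        have hc : Continuous fun u : E => ‖u - v‖ := (continuous_id.sub continuous_const).norm
        have h0 := hc.tendsto v
        simp only [sub_self, norm_zero] at h0
        exact h0.eventually_lt_const (by positivity)
      filter_upwards [ha, hball] with u h1 h2
      by_cases hne : u = v
      · subst hne; linarith
      · have hr : 0 < ‖u - v‖ := by rw [norm_pos_iff, sub_ne_zero]; exact hne
        have h3 := (le_div_iff₀ hr).mp (h1 (by simpa using hne))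
        have h4 : ‖u - v‖ * (|a| + 1) < ε := (lt_div_iff₀ (by positivity)).mp h2
        have h5 : ‖u - v‖ * (|a| + 1) = |a| * ‖u - v‖ + ‖u - v‖ := by ring
        have h6 : -|a| * ‖u - v‖ ≤ a * ‖u - v‖ :=
          mul_le_mul_of_nonneg_right (neg_abs_le a) hr.le
        linarith
    · exfalso
      obtain ⟨e0, he0⟩ : ∃ e0 : E, e0 ≠ 0 := by
        by_contra hcon
        push_neg at hcon
        apply hS
        refine ⟨0, ?_⟩
        have hempty : ({v}ᶜ : Set E) = ∅ := by
          ext u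
          simp [hcon u, hcon v]
        have hbot : (𝓝[≠] v : Filter E) = ⊥ := by
          rw [show (𝓝[≠] v : Filter E) = 𝓝[({v}ᶜ : Set E)] v from rfl, hempty,
            nhdsWithin_empty]
        simp [hbot]
      have hc0pos : 0 < L * (J v + 1) + 1 := by nlinarith [hJnonneg v, hL]
      have hnorm : ‖((L * (J v + 1) + 1) / ‖e0‖) • e0‖ = L * (J v + 1) + 1 := by
        rw [norm_smul, norm_div, Real.norm_eq_abs, abs_of_pos hc0pos,
          Real.norm_eq_abs, abs_of_pos (norm_pos_iff.mpr he0)]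
        exact div_mul_cancel₀ _ (norm_ne_zero_iff.mpr he0)
      have hmem := fsub_univ_of_unbounded hS (((L * (J v + 1) + 1) / ‖e0‖) • e0)
      have hb3 := hJ3 v _ hmem
      rw [hnorm] at hb3
      linarith
  have hJlsc : LowerSemicontinuous J := by
    intro v c hc
    have h1 := hlscJ v ((J v - c) / 2) (by linarith)
    exact h1.mono fun u hu => by linarith
  -- the cluster point analysis
  intro z hz
  obtain ⟨σ0, hσ0mono, hσ0t⟩ := TopologicalSpace.FirstCountableTopology.tendsto_subseq hz
  set σ : ℕ → ℕ := fun k => σ0 (k + 1) with hσdef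
  have hσk : ∀ k, k + 1 ≤ σ k := fun k => hσ0mono.le_apply
  have hσ1 : ∀ k, 1 ≤ σ k := fun k => le_trans (Nat.le_add_left 1 k) (hσk k)
  have hwσ : Tendsto (fun k => w (σ k)) atTop (𝓝 z) := by
    have := (tendsto_add_atTop_iff_nat 1).mpr hσ0t
    exact this
  have hvecinc : Tendsto (fun j => w (j + 1) - w j) atTop (𝓝 0) :=
    tendsto_zero_iff_norm_tendsto_zero.mpr hinc0
  have hσsub : Tendsto (fun k => σ k - 1) atTop atTop := by
    apply tendsto_atTop_mono _ tendsto_id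
    intro k
    have h9 : k + 1 ≤ σ k := hσk k
    simp only [id]
    omega
  have hprev : Tendsto (fun k => w (σ k - 1)) atTop (𝓝 z) := by
    have h1 : Tendsto (fun k => w (σ k - 1 + 1) - w (σ k - 1)) atTop (𝓝 0) :=
      hvecinc.comp hσsub
    have h2 : (fun k => w (σ k - 1)) = fun k => w (σ k) - (w (σ k - 1 + 1) - w (σ k - 1)) := by
      funext k
      rw [Nat.sub_add_cancel (hσ1 k)]
      abel
    rw [h2]
    have := hwσ.sub h1
    simpa using this
  have hAcont : Continuous A := A.continuous_of_finiteDimensional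
  have hAz : A z = b := by
    have h1 : Tendsto (fun k => A (w (σ k))) atTop (𝓝 (A z)) := (hAcont.tendsto z).comp hwσ
    have h2 : (fun k => A (w (σ k))) = fun _ => b := by
      funext k; exact hfeas _ (hσ1 k)
    rw [h2] at h1
    exact tendsto_nhds_unique h1 tendsto_const_nhds
  refine ⟨hAz, ?_⟩
  -- energy limit along the subsequence
  have hσtop : Tendsto σ atTop atTop := by
    apply tendsto_atTop_mono _ tendsto_id
    intro k
    have h9 : k + 1 ≤ σ k := hσk k
    simp only [id]
    omega
  have hlσ : Tendsto (fun k => e (σ k)) atTop (𝓝 l) := htende.comp hσtop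
  have hψσ : Tendsto (fun k => α * ψ (w (σ k) - w 0)) atTop (𝓝 (α * ψ (z - w 0))) := by
    have h1 := (hφcont.tendsto (z - w 0)).comp (hwσ.sub (tendsto_const_nhds (x := w 0)))
    simpa [Function.comp_def] using h1
  have hJσ : Tendsto (fun k => J (w (σ k))) atTop (𝓝 (l - α * ψ (z - w 0))) := by
    have h1 := hlσ.sub hψσ
    have h2 : (fun k => e (σ k) - α * ψ (w (σ k) - w 0)) = fun k => J (w (σ k)) := by
      funext k; simp [he]
    rwa [h2] at h1
  have hJzle : J z ≤ l - α * ψ (z - w 0) := by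
    by_contra hcon
    push_neg at hcon
    have hev : ∀ᶠ k in atTop,
        J z - (J z - (l - α * ψ (z - w 0))) / 2 ≤ J (w (σ k)) :=
      hwσ.eventually (hlscJ z _ (by linarith))
    have h1 := ge_of_tendsto hJσ hev
    linarith
  have hstar : ∀ u : E, A u = b →
      J z + α * ψ (z - w 0) ≤ J u + η * ‖u - z‖ ^ 2 + α * ψ (u - w 0) := by
    intro u hu
    have hkey : ∀ k, e (σ k) + η * ‖w (σ k) - w (σ k - 1)‖ ^ 2
        ≤ J u + η * ‖u - w (σ k - 1)‖ ^ 2 + α * ψ (u - w 0) := by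
      intro k
      have h1 := (hwmin (σ k - 1)).2 u hu
      rw [Nat.sub_add_cancel (hσ1 k)] at h1
      simp only [he]
      linarith
    have h0 : Tendsto (fun k => w (σ k) - w (σ k - 1)) atTop (𝓝 0) := by
      simpa using hwσ.sub hprev
    have h1 : Tendsto (fun k => η * ‖w (σ k) - w (σ k - 1)‖ ^ 2) atTop (𝓝 0) := by
      have := ((h0.norm).pow 2).const_mul η
      simpa using this
    have hLHS : Tendsto (fun k => e (σ k) + η * ‖w (σ k) - w (σ k - 1)‖ ^ 2) atTop (𝓝 l) := by
      have := hlσ.add h1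
      simpa using this
    have hRHS : Tendsto (fun k => J u + η * ‖u - w (σ k - 1)‖ ^ 2 + α * ψ (u - w 0)) atTop
        (𝓝 (J u + η * ‖u - z‖ ^ 2 + α * ψ (u - w 0))) := by
      have h2 : Tendsto (fun k => ‖u - w (σ k - 1)‖ ^ 2) atTop (𝓝 (‖u - z‖ ^ 2)) :=
        ((tendsto_const_nhds.sub hprev).norm).pow 2
      exact (tendsto_const_nhds.add (h2.const_mul η)).add tendsto_const_nhds
    have hlim : l ≤ J u + η * ‖u - z‖ ^ 2 + α * ψ (u - w 0) :=
      le_of_tendsto_of_tendsto' hLHS hRHS hkey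
    linarith [hJzle]
  -- the penalized decoupled minimization scheme
  have hsqrtle : ∀ x c : ℝ, 0 ≤ x → x ^ 2 ≤ c → x ≤ Real.sqrt c := by
    intro x c hx hc
    have h1 := Real.sqrt_le_sqrt hc
    rwa [Real.sqrt_sq hx] at h1
  set Φ : ℕ → E × E → ℝ := fun n q =>
    J q.1 + α * ψ (q.2 - w 0) + ((n : ℝ) + 1) * ‖q.1 - q.2‖ ^ 2
      + ((n : ℝ) + 1) * ‖A q.1 - b‖ ^ 2 + 2 * η * ‖q.1 - z‖ ^ 2 with hΦdef
  have hΦzz : ∀ n, Φ n (z, z) = J z + α * ψ (z - w 0) := by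
    intro n
    simp [hΦdef, hAz]
  have hΦlsc : ∀ n, LowerSemicontinuous (Φ n) := by
    intro n
    have hc1 : Continuous fun q : E × E => α * ψ (q.2 - w 0) :=
      hφcont.comp (continuous_snd.sub continuous_const)
    have hc2 : Continuous fun q : E × E => ((n : ℝ) + 1) * ‖q.1 - q.2‖ ^ 2 :=
      continuous_const.mul ((continuous_fst.sub continuous_snd).norm.pow 2)
    have hc3 : Continuous fun q : E × E => ((n : ℝ) + 1) * ‖A q.1 - b‖ ^ 2 :=
      continuous_const.mul (((hAcont.comp continuous_fst).sub continuous_const).norm.pow 2)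
    have hc4 : Continuous fun q : E × E => 2 * η * ‖q.1 - z‖ ^ 2 :=
      continuous_const.mul ((continuous_fst.sub continuous_const).norm.pow 2)
    have hl1 : LowerSemicontinuous fun q : E × E => J q.1 :=
      hJlsc.comp continuous_fst
    exact (((hl1.add hc1.lowerSemicontinuous).add hc2.lowerSemicontinuous).add
      hc3.lowerSemicontinuous).add hc4.lowerSemicontinuous
  have hterm : ∀ (n : ℕ) (q : E × E), Φ n q ≤ J z + α * ψ (z - w 0) →
      J q.1 ≤ J z + α * ψ (z - w 0) ∧
      ((n : ℝ) + 1) * ‖q.1 - q.2‖ ^ 2 ≤ J z + α * ψ (z - w 0) ∧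
      ((n : ℝ) + 1) * ‖A q.1 - b‖ ^ 2 ≤ J z + α * ψ (z - w 0) ∧
      2 * η * ‖q.1 - z‖ ^ 2 ≤ J z + α * ψ (z - w 0) ∧
      J q.1 + α * ψ (q.2 - w 0) + 2 * η * ‖q.1 - z‖ ^ 2 ≤ J z + α * ψ (z - w 0) := by
    intro n q hq
    simp only [hΦdef] at hq
    have h1 := hJnonneg q.1
    have h2 := hαψ (q.2 - w 0)
    have h3 : 0 ≤ ((n : ℝ) + 1) * ‖q.1 - q.2‖ ^ 2 := by positivity
    have h4 : 0 ≤ ((n : ℝ) + 1) * ‖A q.1 - b‖ ^ 2 := by positivity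
    have h5 : 0 ≤ 2 * η * ‖q.1 - z‖ ^ 2 :=
      mul_nonneg (by linarith [hη.le]) (sq_nonneg _)
    exact ⟨by linarith, by linarith, by linarith, by linarith, by linarith⟩
  have hV0nn : 0 ≤ J z + α * ψ (z - w 0) := add_nonneg (hJnonneg z) (hαψ _)
  have hminex : ∀ n : ℕ, ∃ m : E × E, ∀ q, Φ n m ≤ Φ n q := by
    intro n
    apply lsc_attains (hΦlsc n) (z, z)
    rw [isBounded_iff_forall_norm_le]
    refine ⟨‖z‖ + Real.sqrt ((J z + α * ψ (z - w 0)) / (2 * η)) +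
      (‖z‖ + Real.sqrt ((J z + α * ψ (z - w 0)) / (2 * η)) +
        Real.sqrt (J z + α * ψ (z - w 0))), ?_⟩
    rintro q hq
    rw [Set.mem_setOf_eq, hΦzz n] at hq
    obtain ⟨-, h2, -, h4, -⟩ := hterm n q hq
    have hb1 : ‖q.1 - z‖ ≤ Real.sqrt ((J z + α * ψ (z - w 0)) / (2 * η)) := by
      apply hsqrtle _ _ (norm_nonneg _)
      rw [le_div_iff₀ (by linarith [hη])]
      nlinarith [h4]
    have hb2 : ‖q.1 - q.2‖ ≤ Real.sqrt (J z + α * ψ (z - w 0)) := by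
      apply hsqrtle _ _ (norm_nonneg _)
      have hn1 : (1 : ℝ) ≤ (n : ℝ) + 1 := by
        have := Nat.cast_nonneg (α := ℝ) n
        linarith
      nlinarith [sq_nonneg ‖q.1 - q.2‖]
    have hq1 : ‖q.1‖ ≤ ‖z‖ + Real.sqrt ((J z + α * ψ (z - w 0)) / (2 * η)) := by
      have := norm_sub_norm_le (q.1) z
      have h0 : ‖q.1‖ - ‖z‖ ≤ ‖q.1 - z‖ := by
        have := norm_sub_norm_le q.1 z
        linarith [this]
      linarith
    have hq2 : ‖q.2‖ ≤ ‖z‖ + Real.sqrt ((J z + α * ψ (z - w 0)) / (2 * η)) +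
        Real.sqrt (J z + α * ψ (z - w 0)) := by
      have h0 : ‖q.2‖ ≤ ‖q.1‖ + ‖q.1 - q.2‖ := by
        have := norm_sub_le_norm_sub_add_norm_sub q.2 q.1 q.1
        have h9 : ‖q.2‖ ≤ ‖q.2 - q.1‖ + ‖q.1‖ := by
          have := norm_le_norm_add_norm_sub' q.2 q.1
          linarith [this]
        rw [norm_sub_rev] at h9
        linarith
      linarith
    rw [Prod.norm_def]
    apply max_le
    · linarith [Real.sqrt_nonneg (J z + α * ψ (z - w 0)),
        Real.sqrt_nonneg ((J z + α * ψ (z - w 0)) / (2 * η)), norm_nonneg z]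
    · linarith [Real.sqrt_nonneg ((J z + α * ψ (z - w 0)) / (2 * η)), norm_nonneg z]
  choose U hU using hminex
  have hUval : ∀ n, Φ n (U n) ≤ J z + α * ψ (z - w 0) := fun n =>
    le_of_le_of_eq (hU n (z, z)) (hΦzz n)
  -- operator norm bound for A
  have hAbd : ∀ x : E, ‖A x‖ ≤ ‖LinearMap.toContinuousLinearMap A‖ * ‖x‖ := fun x =>
    (LinearMap.toContinuousLinearMap A).le_opNorm x
  -- first-order condition in the first coordinate
  set ξs : ℕ → E := fun n =>
    (-(2 * ((n : ℝ) + 1))) • ((U n).1 - (U n).2)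
      + (-(2 * ((n : ℝ) + 1))) • ((LinearMap.adjoint A) (A (U n).1 - b))
      + (-(4 * η)) • ((U n).1 - z) with hξs
  have hξmem : ∀ n, ξs n ∈ fsub J (U n).1 := by
    intro n
    apply mem_fsub_of_quadratic
      (K := ((n : ℝ) + 1) + ((n : ℝ) + 1) * ‖LinearMap.toContinuousLinearMap A‖ ^ 2 + 2 * η)
    · have h0 : (0:ℝ) ≤ ((n : ℝ) + 1) := by positivity
      have h1 : (0:ℝ) ≤ ((n : ℝ) + 1) * ‖LinearMap.toContinuousLinearMap A‖ ^ 2 := by positivity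
      linarith [hη.le]
    intro v
    have hmin := hU n (v, (U n).2)
    simp only [hΦdef] at hmin
    have hv1 : v - (U n).2 = ((U n).1 - (U n).2) + (v - (U n).1) := by abel
    have he1 : ‖v - (U n).2‖ ^ 2 = ‖(U n).1 - (U n).2‖ ^ 2
        + 2 * ⟪(U n).1 - (U n).2, v - (U n).1⟫ + ‖v - (U n).1‖ ^ 2 := by
      rw [hv1, norm_add_sq_real]
    have hv2 : A v - b = (A (U n).1 - b) + A (v - (U n).1) := by
      rw [map_sub]; abel
    have he2 : ‖A v - b‖ ^ 2 = ‖A (U n).1 - b‖ ^ 2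
        + 2 * ⟪(LinearMap.adjoint A) (A (U n).1 - b), v - (U n).1⟫
        + ‖A (v - (U n).1)‖ ^ 2 := by
      rw [hv2, norm_add_sq_real, LinearMap.adjoint_inner_left]
    have hv3 : v - z = ((U n).1 - z) + (v - (U n).1) := by abel
    have he3 : ‖v - z‖ ^ 2 = ‖(U n).1 - z‖ ^ 2
        + 2 * ⟪(U n).1 - z, v - (U n).1⟫ + ‖v - (U n).1‖ ^ 2 := by
      rw [hv3, norm_add_sq_real]
    have hAh : ‖A (v - (U n).1)‖ ^ 2
        ≤ ‖LinearMap.toContinuousLinearMap A‖ ^ 2 * ‖v - (U n).1‖ ^ 2 := by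
      have h1 := hAbd (v - (U n).1)
      nlinarith [norm_nonneg (A (v - (U n).1)), norm_nonneg (v - (U n).1),
        norm_nonneg (LinearMap.toContinuousLinearMap A)]
    have hAh2 : ((n : ℝ) + 1) * ‖A (v - (U n).1)‖ ^ 2
        ≤ ((n : ℝ) + 1) * (‖LinearMap.toContinuousLinearMap A‖ ^ 2 * ‖v - (U n).1‖ ^ 2) :=
      mul_le_mul_of_nonneg_left hAh (by positivity)
    have hinner : ⟪ξs n, v - (U n).1⟫
        = -(2 * ((n : ℝ) + 1)) * ⟪(U n).1 - (U n).2, v - (U n).1⟫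
          + -(2 * ((n : ℝ) + 1)) * ⟪(LinearMap.adjoint A) (A (U n).1 - b), v - (U n).1⟫
          + -(4 * η) * ⟪(U n).1 - z, v - (U n).1⟫ := by
      simp [hξs, inner_add_left, real_inner_smul_left]
    rw [hinner]
    rw [he1, he2, he3] at hmin
    nlinarith [hmin, hAh2]
  -- first-order condition in the second coordinate
  set ζs : ℕ → E := fun n => (2 * ((n : ℝ) + 1)) • ((U n).1 - (U n).2) with hζs
  have hζmem : ∀ n, ζs n ∈ csub (fun x => α * ψ x) ((U n).2 - w 0) := by
    intro n
    simp only [csub, Set.mem_setOf_eq]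
    intro y
    set Δ : E := y - ((U n).2 - w 0) with hΔ
    have hinner2 : ⟪ζs n, Δ⟫ = 2 * ((n : ℝ) + 1) * ⟪(U n).1 - (U n).2, Δ⟫ := by
      simp [hζs, real_inner_smul_left]
    suffices hsuf : 0 ≤ (α * ψ y - α * ψ ((U n).2 - w 0) - ⟪ζs n, Δ⟫) by
      simp only [hΔ] at hsuf ⊢
      linarith
    apply nonneg_of_forall_unit (d := ((n : ℝ) + 1) * ‖Δ‖ ^ 2)
    intro t ht0 ht1
    have hmin := hU n ((U n).1, (U n).2 + t • Δ)
    simp only [hΦdef] at hmin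
    have hpt : (U n).2 + t • Δ - w 0 = (1 - t) • ((U n).2 - w 0) + t • y := by
      rw [hΔ, sub_smul, smul_sub, one_smul]
      abel
    have hcvx : α * ψ ((1 - t) • ((U n).2 - w 0) + t • y)
        ≤ (1 - t) * (α * ψ ((U n).2 - w 0)) + t * (α * ψ y) := by
      calc α * ψ ((1 - t) • ((U n).2 - w 0) + t • y)
          ≤ α * ψ ((1 - t) • ((U n).2 - w 0)) + α * ψ (t • y) := hφsub _ _
        _ = (1 - t) * (α * ψ ((U n).2 - w 0)) + t * (α * ψ y) := by
            rw [hφhom (1 - t) (by linarith) _, hφhom t ht0.le _]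
    have hqd : ‖(U n).1 - ((U n).2 + t • Δ)‖ ^ 2 = ‖(U n).1 - (U n).2‖ ^ 2
        - 2 * t * ⟪(U n).1 - (U n).2, Δ⟫ + t ^ 2 * ‖Δ‖ ^ 2 := by
      have hsplit : (U n).1 - ((U n).2 + t • Δ) = ((U n).1 - (U n).2) + ((-t) • Δ) := by
        rw [neg_smul]; abel
      rw [hsplit, norm_add_sq_real, real_inner_smul_right, norm_smul]
      simp only [Real.norm_eq_abs, mul_pow, sq_abs]
      ring
    rw [hpt, hqd] at hmin
    have hmin2 : 0 ≤ t * ((α * ψ y - α * ψ ((U n).2 - w 0) - ⟪ζs n, Δ⟫)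
        + t * (((n : ℝ) + 1) * ‖Δ‖ ^ 2)) := by
      rw [hinner2]
      nlinarith [hmin, hcvx]
    by_contra hneg2
    push_neg at hneg2
    have hcon2 := mul_neg_of_pos_of_neg ht0 hneg2
    linarith
  -- bounds on the multipliers
  have hξbd : ∀ n, ‖ξs n‖ ≤ L * ((J z + α * ψ (z - w 0)) + 1) := by
    intro n
    have h1 := hJ3 _ _ (hξmem n)
    have h2 : J (U n).1 ≤ J z + α * ψ (z - w 0) := (hterm n (U n) (hUval n)).1
    have h3 := mul_le_mul_of_nonneg_left (by linarith : J (U n).1 + 1 ≤ (J z + α * ψ (z - w 0)) + 1) hL.le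
    linarith
  have hζbd : ∀ n, ‖ζs n‖ ≤ Cψ := by
    intro n
    have h1 := hζmem n
    simp only [csub, Set.mem_setOf_eq] at h1
    have h3 := h1 (((U n).2 - w 0) + ζs n)
    rw [add_sub_cancel_left] at h3
    have h4 := hφsub ((U n).2 - w 0) (ζs n)
    have h5 := hφbd (ζs n)
    have h6 : ⟪ζs n, ζs n⟫ = ‖ζs n‖ ^ 2 := real_inner_self_eq_norm_sq _
    rcases eq_or_lt_of_le (norm_nonneg (ζs n)) with h7 | h7
    · rw [← h7]; exact hCψ0
    · nlinarith
  -- vanishing coupling terms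
  have hdiv0 : Tendsto (fun n : ℕ => (J z + α * ψ (z - w 0)) / ((n : ℝ) + 1)) atTop (𝓝 0) := by
    apply Tendsto.div_atTop tendsto_const_nhds
    exact tendsto_atTop_add_const_right _ 1 tendsto_natCast_atTop_atTop
  have hsqrt0 : Tendsto (fun n : ℕ => Real.sqrt ((J z + α * ψ (z - w 0)) / ((n : ℝ) + 1)))
      atTop (𝓝 0) := by
    have h1 := (Real.continuous_sqrt.tendsto 0).comp hdiv0
    simp only [Function.comp_def, Real.sqrt_zero] at h1
    exact h1
  have hupnorm : ∀ n, ‖(U n).1 - (U n).2‖ ≤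
      Real.sqrt ((J z + α * ψ (z - w 0)) / ((n : ℝ) + 1)) := by
    intro n
    apply hsqrtle _ _ (norm_nonneg _)
    rw [le_div_iff₀ (by positivity)]
    have h2 := (hterm n (U n) (hUval n)).2.1
    nlinarith [h2]
  have hAunorm : ∀ n, ‖A (U n).1 - b‖ ≤
      Real.sqrt ((J z + α * ψ (z - w 0)) / ((n : ℝ) + 1)) := by
    intro n
    apply hsqrtle _ _ (norm_nonneg _)
    rw [le_div_iff₀ (by positivity)]
    have h2 := (hterm n (U n) (hUval n)).2.2.1
    nlinarith [h2]
  have hup0 : Tendsto (fun n => (U n).1 - (U n).2) atTop (𝓝 0) := by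
    rw [tendsto_zero_iff_norm_tendsto_zero]
    exact squeeze_zero (fun n => norm_nonneg _) hupnorm hsqrt0
  have hAu0 : Tendsto (fun n => A (U n).1 - b) atTop (𝓝 0) := by
    rw [tendsto_zero_iff_norm_tendsto_zero]
    exact squeeze_zero (fun n => norm_nonneg _) hAunorm hsqrt0
  -- extraction of convergent subsequences
  have hubd2 : ∀ n, (U n).1 ∈ Metric.closedBall z
      (Real.sqrt ((J z + α * ψ (z - w 0)) / (2 * η))) := by
    intro n
    rw [Metric.mem_closedBall, dist_eq_norm]
    apply hsqrtle _ _ (norm_nonneg _)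
    rw [le_div_iff₀ (by linarith [hη])]
    have h2 := (hterm n (U n) (hUval n)).2.2.2.1
    nlinarith [h2]
  obtain ⟨zu, hzuc, τ1, hτ1m, hτ1t⟩ :=
    tendsto_subseq_of_bounded Metric.isBounded_closedBall hubd2
  have hξball : ∀ k, ξs (τ1 k) ∈ Metric.closedBall (0 : E)
      (L * ((J z + α * ψ (z - w 0)) + 1)) := by
    intro k
    rw [Metric.mem_closedBall, dist_zero_right]
    exact hξbd _
  obtain ⟨ξstar, hξc, τ2, hτ2m, hτ2t⟩ :=
    tendsto_subseq_of_bounded Metric.isBounded_closedBall hξball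
  have hζball : ∀ k, ζs (τ1 (τ2 k)) ∈ Metric.closedBall (0 : E) Cψ := by
    intro k
    rw [Metric.mem_closedBall, dist_zero_right]
    exact hζbd _
  obtain ⟨ζstar, hζc, τ3, hτ3m, hτ3t⟩ :=
    tendsto_subseq_of_bounded Metric.isBounded_closedBall hζball
  set τ : ℕ → ℕ := fun k => τ1 (τ2 (τ3 k)) with hτdef
  have hτm : StrictMono τ := hτ1m.comp (hτ2m.comp hτ3m)
  have hτtop : Tendsto τ atTop atTop := hτm.tendsto_atTop
  have h23top : Tendsto (fun k => τ2 (τ3 k)) atTop atTop := (hτ2m.comp hτ3m).tendsto_atTop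
  have hut : Tendsto (fun k => (U (τ k)).1) atTop (𝓝 zu) := by
    have h1 := hτ1t.comp h23top
    simpa [Function.comp_def, hτdef] using h1
  have hξt : Tendsto (fun k => ξs (τ k)) atTop (𝓝 ξstar) := by
    have h1 := hτ2t.comp hτ3m.tendsto_atTop
    simpa [Function.comp_def, hτdef] using h1
  have hζt : Tendsto (fun k => ζs (τ k)) atTop (𝓝 ζstar) := by
    simpa [Function.comp_def, hτdef] using hτ3t
  have hptt : Tendsto (fun k => (U (τ k)).2) atTop (𝓝 zu) := by
    have h1 : Tendsto (fun k => (U (τ k)).1 - (U (τ k)).2) atTop (𝓝 0) := by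
      have := hup0.comp hτtop
      simpa [Function.comp_def] using this
    have h2 := hut.sub h1
    simpa using h2
  have hAzu : A zu = b := by
    have h1 : Tendsto (fun k => A (U (τ k)).1) atTop (𝓝 (A zu)) := by
      have := (hAcont.tendsto zu).comp hut
      simpa [Function.comp_def] using this
    have h2 : Tendsto (fun k => A (U (τ k)).1) atTop (𝓝 b) := by
      have h3 : Tendsto (fun k => A (U (τ k)).1 - b) atTop (𝓝 0) := by
        have := hAu0.comp hτtop
        simpa [Function.comp_def] using this
      have h4 := h3.add (tendsto_const_nhds (x := b))
      simpa using h4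
    exact tendsto_nhds_unique h1 h2
  -- identification of the limit: zu = z
  have hchain2 : J zu + α * ψ (zu - w 0) + 2 * η * ‖zu - z‖ ^ 2
      ≤ J z + α * ψ (z - w 0) := by
    have hRHSt : Tendsto (fun k => (J z + α * ψ (z - w 0)) - α * ψ ((U (τ k)).2 - w 0)
        - 2 * η * ‖(U (τ k)).1 - z‖ ^ 2) atTop
        (𝓝 ((J z + α * ψ (z - w 0)) - α * ψ (zu - w 0) - 2 * η * ‖zu - z‖ ^ 2)) := by
      have hψt : Tendsto (fun k => α * ψ ((U (τ k)).2 - w 0)) atTop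
          (𝓝 (α * ψ (zu - w 0))) := by
        have := (hφcont.tendsto (zu - w 0)).comp (hptt.sub (tendsto_const_nhds (x := w 0)))
        simpa [Function.comp_def] using this
      have hnt : Tendsto (fun k => 2 * η * ‖(U (τ k)).1 - z‖ ^ 2) atTop
          (𝓝 (2 * η * ‖zu - z‖ ^ 2)) :=
        (((hut.sub tendsto_const_nhds).norm.pow 2).const_mul _)
      exact (tendsto_const_nhds.sub hψt).sub hnt
    by_contra hcon
    push_neg at hcon
    set εz := (J zu + α * ψ (zu - w 0) + 2 * η * ‖zu - z‖ ^ 2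
      - (J z + α * ψ (z - w 0))) / 2 with hεz
    have hεzpos : 0 < εz := by rw [hεz]; linarith
    have hev : ∀ᶠ k in atTop, J zu - εz ≤ J (U (τ k)).1 :=
      hut.eventually (hlscJ zu εz hεzpos)
    have hptws : ∀ k, J (U (τ k)).1 ≤ (J z + α * ψ (z - w 0))
        - α * ψ ((U (τ k)).2 - w 0) - 2 * η * ‖(U (τ k)).1 - z‖ ^ 2 := by
      intro k
      have := (hterm (τ k) (U (τ k)) (hUval (τ k))).2.2.2.2
      linarith
    have h5 : J zu - εz ≤ (J z + α * ψ (z - w 0)) - α * ψ (zu - w 0)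
        - 2 * η * ‖zu - z‖ ^ 2 := by
      apply ge_of_tendsto hRHSt
      filter_upwards [hev] with k hk
      exact le_trans hk (hptws k)
    rw [hεz] at h5
    linarith
  have hzuz : zu = z := by
    have hst := hstar zu hAzu
    have h1 : η * ‖zu - z‖ ^ 2 ≤ 0 := by linarith [hst, hchain2]
    have h2 : ‖zu - z‖ ^ 2 ≤ 0 := by
      by_contra hh
      push_neg at hh
      have := mul_pos hη hh
      linarith
    have h3 : ‖zu - z‖ = 0 := by
      have h4 : ‖zu - z‖ ^ 2 = 0 := le_antisymm h2 (sq_nonneg _)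
      exact (pow_eq_zero_iff (n := 2) (by norm_num)).mp h4
    rw [← sub_eq_zero]
    exact norm_eq_zero.mp h3
  rw [hzuz] at hut hptt
  -- ξstar is a genuine Fréchet subgradient of J at z, by strong monotonicity + prox
  have hprem : ∀ (v' ξ' : E), ξ' ∈ fsub J v' →
      (ν - 2 * η) * ‖z - v'‖ ^ 2 ≤ ⟪ξstar - ξ', z - v'⟫ := by
    intro v' ξ' hξ'
    have hptwise : ∀ k, (ν - 2 * η) * ‖(U (τ k)).1 - v'‖ ^ 2
        ≤ ⟪ξs (τ k) - ξ', (U (τ k)).1 - v'⟫ := by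
      intro k
      have h1 := hJ2 (U (τ k)).1 v' (ξs (τ k) + (2 * η) • (U (τ k)).1) (ξ' + (2 * η) • v')
        (mem_fsub_eta_of_mem_fsub hη.le (hξmem (τ k))) (mem_fsub_eta_of_mem_fsub hη.le hξ')
      have h3 : ξs (τ k) + (2 * η) • (U (τ k)).1 - (ξ' + (2 * η) • v')
          = (ξs (τ k) - ξ') + (2 * η) • ((U (τ k)).1 - v') := by
        rw [smul_sub]; abel
      rw [h3, inner_add_left, real_inner_smul_left, real_inner_self_eq_norm_sq] at h1
      linarith
    have hL1 : Tendsto (fun k => (ν - 2 * η) * ‖(U (τ k)).1 - v'‖ ^ 2) atTop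
        (𝓝 ((ν - 2 * η) * ‖z - v'‖ ^ 2)) :=
      ((hut.sub tendsto_const_nhds).norm.pow 2).const_mul _
    have hL2 : Tendsto (fun k => ⟪ξs (τ k) - ξ', (U (τ k)).1 - v'⟫) atTop
        (𝓝 ⟪ξstar - ξ', z - v'⟫) :=
      (hξt.sub tendsto_const_nhds).inner (hut.sub tendsto_const_nhds)
    exact le_of_tendsto_of_tendsto' hL1 hL2 hptwise
  have h2ηne : (2 * η) ≠ 0 := by linarith
  have hproxlsc : LowerSemicontinuous fun v : E =>
      J v + η * ‖v - (z + (2 * η)⁻¹ • ξstar)‖ ^ 2 :=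
    hJlsc.add (continuous_const.mul
      ((continuous_id.sub continuous_const).norm.pow 2)).lowerSemicontinuous
  have hproxbdd : Bornology.IsBounded {v : E |
      J v + η * ‖v - (z + (2 * η)⁻¹ • ξstar)‖ ^ 2
        ≤ J (z + (2 * η)⁻¹ • ξstar)
          + η * ‖(z + (2 * η)⁻¹ • ξstar) - (z + (2 * η)⁻¹ • ξstar)‖ ^ 2} := by
    rw [isBounded_iff_forall_norm_le]
    refine ⟨‖z + (2 * η)⁻¹ • ξstar‖ + Real.sqrt (J (z + (2 * η)⁻¹ • ξstar) / η), ?_⟩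
    intro v hv
    simp only [Set.mem_setOf_eq, sub_self, norm_zero] at hv
    have h1 : ‖v - (z + (2 * η)⁻¹ • ξstar)‖ ≤ Real.sqrt (J (z + (2 * η)⁻¹ • ξstar) / η) := by
      apply hsqrtle _ _ (norm_nonneg _)
      rw [le_div_iff₀ hη]
      nlinarith [hJnonneg v, hv]
    have h2 := norm_sub_norm_le v (z + (2 * η)⁻¹ • ξstar)
    linarith
  obtain ⟨ub, hub⟩ := lsc_attains hproxlsc (z + (2 * η)⁻¹ • ξstar) hproxbdd
  have hξbar : (2 * η) • ((z + (2 * η)⁻¹ • ξstar) - ub) ∈ fsub J ub := by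
    apply mem_fsub_of_quadratic (K := η) hη.le
    intro v
    have h1 := hub v
    have hsplit : v - (z + (2 * η)⁻¹ • ξstar)
        = (ub - (z + (2 * η)⁻¹ • ξstar)) + (v - ub) := by abel
    have he1 : ‖v - (z + (2 * η)⁻¹ • ξstar)‖ ^ 2 = ‖ub - (z + (2 * η)⁻¹ • ξstar)‖ ^ 2
        + 2 * ⟪ub - (z + (2 * η)⁻¹ • ξstar), v - ub⟫ + ‖v - ub‖ ^ 2 := by
      rw [hsplit, norm_add_sq_real]
    have hinner3 : ⟪(2 * η) • ((z + (2 * η)⁻¹ • ξstar) - ub), v - ub⟫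
        = -(2 * η) * ⟪ub - (z + (2 * η)⁻¹ • ξstar), v - ub⟫ := by
      rw [show (z + (2 * η)⁻¹ • ξstar) - ub = -(ub - (z + (2 * η)⁻¹ • ξstar)) by abel,
        smul_neg, inner_neg_left, real_inner_smul_left]
      ring
    rw [hinner3]
    rw [he1] at h1
    nlinarith [h1]
  have hubz : ub = z := by
    have h1 := hprem ub _ hξbar
    have hx : z + (2 * η)⁻¹ • ξstar - ub = (z - ub) + (2 * η)⁻¹ • ξstar := by abel
    have h2 : ⟪ξstar - (2 * η) • (z + (2 * η)⁻¹ • ξstar - ub), z - ub⟫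
        = -(2 * η) * ‖z - ub‖ ^ 2 := by
      rw [inner_sub_left, hx, smul_add, inner_add_left, real_inner_smul_left,
        real_inner_smul_left, real_inner_smul_left, real_inner_self_eq_norm_sq]
      have hcc : (2 * η) * (2 * η)⁻¹ = 1 := mul_inv_cancel₀ h2ηne
      linear_combination (-(⟪ξstar, z - ub⟫ : ℝ)) * hcc
    rw [h2] at h1
    have h4 : ν * ‖z - ub‖ ^ 2 ≤ 0 := by nlinarith [h1]
    have h5 : ‖z - ub‖ ^ 2 ≤ 0 := by
      by_contra hh
      push_neg at hh
      have := mul_pos hν hh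
      linarith
    have h6 : ‖z - ub‖ = 0 := by
      have := le_antisymm h5 (sq_nonneg _)
      exact (pow_eq_zero_iff (n := 2) (by norm_num)).mp this
    have h7 := norm_eq_zero.mp h6
    rw [sub_eq_zero] at h7
    exact h7.symm
  have hξstarmem : ξstar ∈ fsub J z := by
    have h1 := hξbar
    rw [hubz] at h1
    have h2 : z + (2 * η)⁻¹ • ξstar - z = (2 * η)⁻¹ • ξstar := by abel
    rw [h2, smul_smul, mul_inv_cancel₀ h2ηne, one_smul] at h1
    exact h1
  -- ζstar is a convex subgradient of α ψ at z - w 0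
  have hζstarmem : ζstar ∈ csub (fun x => α * ψ x) (z - w 0) := by
    simp only [csub, Set.mem_setOf_eq]
    intro y
    have hptw : ∀ k, α * ψ ((U (τ k)).2 - w 0) + ⟪ζs (τ k), y - ((U (τ k)).2 - w 0)⟫
        ≤ α * ψ y := by
      intro k
      have h1 := hζmem (τ k)
      simp only [csub, Set.mem_setOf_eq] at h1
      exact h1 y
    have hψt2 : Tendsto (fun k => α * ψ ((U (τ k)).2 - w 0)) atTop
        (𝓝 (α * ψ (z - w 0))) := by
      have := (hφcont.tendsto (z - w 0)).comp (hptt.sub (tendsto_const_nhds (x := w 0)))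
      simpa [Function.comp_def] using this
    have hit : Tendsto (fun k => ⟪ζs (τ k), y - ((U (τ k)).2 - w 0)⟫) atTop
        (𝓝 ⟪ζstar, y - (z - w 0)⟫) :=
      hζt.inner (tendsto_const_nhds.sub (hptt.sub tendsto_const_nhds))
    exact le_of_tendsto (hψt2.add hit) (Filter.Eventually.of_forall hptw)
  -- the sum lies in the range of the adjoint
  have hrange : ξstar + ζstar ∈ Set.range (LinearMap.adjoint A) := by
    have hclosed : IsClosed ((LinearMap.range (LinearMap.adjoint A) : Submodule ℝ E) : Set E) :=
      Submodule.closed_of_finiteDimensional _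
    have hmemn : ∀ k, ξs (τ k) + ζs (τ k) + (4 * η) • ((U (τ k)).1 - z)
        ∈ ((LinearMap.range (LinearMap.adjoint A) : Submodule ℝ E) : Set E) := by
      intro k
      rw [SetLike.mem_coe, LinearMap.mem_range]
      refine ⟨(-(2 * ((τ k : ℝ) + 1))) • (A (U (τ k)).1 - b), ?_⟩
      rw [_root_.map_smul]
      simp only [hξs, hζs]
      module
    have hlimit : Tendsto (fun k => ξs (τ k) + ζs (τ k) + (4 * η) • ((U (τ k)).1 - z)) atTop
        (𝓝 (ξstar + ζstar)) := by
      have h2 : Tendsto (fun k => (U (τ k)).1 - z) atTop (𝓝 0) := by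
        simpa using hut.sub (tendsto_const_nhds (x := z))
      have h1 : Tendsto (fun k => (4 * η) • ((U (τ k)).1 - z)) atTop (𝓝 0) := by
        have := h2.const_smul (4 * η)
        simpa using this
      have := (hξt.add hζt).add h1
      simpa using this
    have hmem2 := hclosed.mem_of_tendsto hlimit (Filter.Eventually.of_forall hmemn)
    rw [SetLike.mem_coe, LinearMap.mem_range] at hmem2
    obtain ⟨q, hq⟩ := hmem2
    exact ⟨q, hq⟩
  refine ⟨ξstar + ζstar, ?_, hrange⟩
  rw [← hw0]
  exact Set.add_mem_add hξstarmem hζstarmem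

end
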